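/- Assume (Dep-2) with ∇F(θ*) = 0 (so E[‖E[g_j(θ*)|F_{j-1}]‖²] ≤ B_ν² ν_j²), (GN-2), (Cov), and that ∇²F(θ*) is invertible with ∇²F(θ*) ⪰ μ I_d, μ > 0. Then for all t ≥ 1: E[ ‖ ∇²F(θ*)^{−1} (1/N_t) Σ_{i=1}^{t} n_i g_i(θ*) ‖² ] ≤ (Λ/N_t²) Σ_{i=1}^{t} n_i^{2(1−σ)} + (C_σ'/(μ² N_t²)) Σ_{i=1}^{t} n_i^{2(1−σ−σ')} + (2 B_ν/(μ² N_t²)) Σ_{j=2}^{t} ( n_j ν_j Σ_{i=1}^{j-1} n_i σ_i ). -/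

import Mathlib

open MeasureTheory Finset
open scoped RealInnerProductSpace Matrix

section Helpers
variable {Ω : Type*} {m0 : MeasurableSpace Ω} {P : Measure Ω}
variable {E : Type*} [NormedAddCommGroup E] [InnerProductSpace ℝ E]

lemma helper_integrable_inner {u v : Ω → E} (hu : MemLp u 2 P) (hv : MemLp v 2 P) :
    Integrable (fun ω => ⟪u ω, v ω⟫) P := by
  refine (MeasureTheory.L2.integrable_inner (𝕜 := ℝ) (hu.toLp u) (hv.toLp v)).congr ?_
  filter_upwards [hu.coeFn_toLp, hv.coeFn_toLp] with ω h1 h2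
  rw [h1, h2]

lemma helper_integrable_normsq {u : Ω → E} (hu : MemLp u 2 P) :
    Integrable (fun ω => ‖u ω‖ ^ 2) P :=
  (helper_integrable_inner hu hu).congr
    (Filter.Eventually.of_forall fun ω => real_inner_self_eq_norm_sq _)

lemma helper_inner_toLp {u v : Ω → E} (hu : MemLp u 2 P) (hv : MemLp v 2 P) :
    inner (𝕜 := ℝ) (hu.toLp u) (hv.toLp v) = ∫ ω, ⟪u ω, v ω⟫ ∂P := by
  rw [MeasureTheory.L2.inner_def]
  apply integral_congr_ae
  filter_upwards [hu.coeFn_toLp, hv.coeFn_toLp] with ω h1 h2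
  rw [h1, h2]

lemma helper_norm_toLp {u : Ω → E} (hu : MemLp u 2 P) :
    ‖hu.toLp u‖ = Real.sqrt (∫ ω, ‖u ω‖ ^ 2 ∂P) := by
  have h : ∫ ω, ‖u ω‖ ^ 2 ∂P = ‖hu.toLp u‖ ^ 2 := by
    rw [← real_inner_self_eq_norm_sq, helper_inner_toLp hu hu]
    apply integral_congr_ae
    exact Filter.Eventually.of_forall fun ω => (real_inner_self_eq_norm_sq _).symm
  rw [h, Real.sqrt_sq (norm_nonneg _)]

lemma helper_cs {u v : Ω → E} (hu : MemLp u 2 P) (hv : MemLp v 2 P) :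
    ∫ ω, ⟪u ω, v ω⟫ ∂P
      ≤ Real.sqrt (∫ ω, ‖u ω‖ ^ 2 ∂P) * Real.sqrt (∫ ω, ‖v ω‖ ^ 2 ∂P) := by
  rw [← helper_inner_toLp hu hv, ← helper_norm_toLp hu, ← helper_norm_toLp hv]
  exact real_inner_le_norm _ _

end Helpers

section CondexpHelpers
variable {Ω : Type*} {m m0 : MeasurableSpace Ω} {P : Measure Ω} [IsFiniteMeasure P]
variable {E : Type*} [NormedAddCommGroup E] [InnerProductSpace ℝ E] [CompleteSpace E]

lemma helper_condExpL2_ae_eq_condexp (hm : m ≤ m0) {v : Ω → E} (hv : MemLp v 2 P) :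
    (condExpL2 E ℝ hm (hv.toLp v) : Ω →₂[P] E) =ᵐ[P] P[v|m] := by
  refine ae_eq_condExp_of_forall_setIntegral_eq hm (hv.integrable one_le_two)
    (fun s _ hμs => integrableOn_Lp_of_measure_ne_top _ fact_one_le_two_ennreal.elim hμs.ne)
    (fun s hs hμs => ?_) (lpMeas.aestronglyMeasurable _)
  rw [integral_condExpL2_eq hm (hv.toLp v) hs hμs.ne]
  refine setIntegral_congr_ae (hm s hs) ?_
  filter_upwards [hv.coeFn_toLp] with ω h _
  exact h

lemma helper_memℒp_condexp (hm : m ≤ m0) {v : Ω → E} (hv : MemLp v 2 P) :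
    MemLp (P[v|m]) 2 P :=
  (Lp.memLp ((condExpL2 E ℝ hm (hv.toLp v) : Ω →₂[P] E))).ae_eq
    (helper_condExpL2_ae_eq_condexp hm hv)

lemma helper_integral_inner_condexp (hm : m ≤ m0) {u v : Ω → E}
    (hu : MemLp u 2 P) (hum : StronglyMeasurable[m] u) (hv : MemLp v 2 P) :
    ∫ ω, ⟪u ω, v ω⟫ ∂P = ∫ ω, ⟪u ω, (P[v|m]) ω⟫ ∂P := by
  set U := hu.toLp u with hU
  set V := hv.toLp v with hV
  have hUm : AEStronglyMeasurable[m] (U : Ω → E) P :=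
    AEStronglyMeasurable.congr hum.aestronglyMeasurable hu.coeFn_toLp.symm
  have e1 : inner (𝕜 := ℝ) V U = ∫ ω, ⟪u ω, v ω⟫ ∂P := by
    rw [MeasureTheory.L2.inner_def]
    apply integral_congr_ae
    filter_upwards [hu.coeFn_toLp, hv.coeFn_toLp] with ω h1 h2
    rw [h1, h2, real_inner_comm]
  have e2 : inner (𝕜 := ℝ) ((condExpL2 E ℝ hm V : Ω →₂[P] E)) U = inner (𝕜 := ℝ) V U :=
    inner_condExpL2_eq_inner_fun hm V U hUm
  have e3 : inner (𝕜 := ℝ) ((condExpL2 E ℝ hm V : Ω →₂[P] E)) U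
      = ∫ ω, ⟪u ω, (P[v|m]) ω⟫ ∂P := by
    rw [MeasureTheory.L2.inner_def]
    apply integral_congr_ae
    filter_upwards [helper_condExpL2_ae_eq_condexp hm hv, hu.coeFn_toLp] with ω h1 h2
    rw [h1, h2, real_inner_comm]
  rw [← e1, ← e2, e3]

end CondexpHelpers

section MatrixHelpers
variable {d : ℕ}

lemma helper_trace_nonneg {M : Matrix (Fin d) (Fin d) ℝ} (hM : M.PosSemidef) :
    0 ≤ M.trace := by
  exact hM.trace_nonneg

open scoped MatrixOrder in
lemma helper_trace_mul_nonneg {S B : Matrix (Fin d) (Fin d) ℝ}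
    (hS : S.PosSemidef) (hB : B.PosSemidef) : 0 ≤ (S * B).trace := by
  obtain ⟨X, hX⟩ : ∃ X : Matrix (Fin d) (Fin d) ℝ, S = Xᴴ * X := by
    have h0 : 0 ≤ S := hS.nonneg
    refine ⟨CFC.sqrt S, ?_⟩
    rw [← Matrix.star_eq_conjTranspose, (CFC.sqrt_nonneg S).isSelfAdjoint.star_eq,
      CFC.sqrt_mul_sqrt_self S h0]
  have h1 : (S * B).trace = (X * B * X.conjTranspose).trace := by
    rw [hX, Matrix.mul_assoc, Matrix.trace_mul_comm, Matrix.mul_assoc]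
  rw [h1]
  exact helper_trace_nonneg (hB.mul_mul_conjTranspose_same X)

end MatrixHelpers

lemma helper_sum_decomp (I : Finset ℕ) (c : ℕ → ℕ → ℝ) (hsym : ∀ i j, c i j = c j i) :
    ∑ i ∈ I, ∑ j ∈ I, c i j
      = ∑ i ∈ I, c i i + 2 * ∑ j ∈ I, ∑ i ∈ I.filter (· < j), c i j := by
  have split : ∀ i ∈ I, ∑ j ∈ I, c i j
      = c i i + (∑ j ∈ I.filter (fun j => j < i), c i j
          + ∑ j ∈ I.filter (fun j => i < j), c i j) := by
    intro i hi
    rw [← Finset.sum_filter_add_sum_filter_not I (fun j => i < j) (c i)]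
    have h2 : I.filter (fun j => ¬ i < j)
        = I.filter (fun j => j < i) ∪ {i} := by
      ext a
      simp only [Finset.mem_filter, Finset.mem_union, Finset.mem_singleton]
      constructor
      · rintro ⟨ha, h⟩
        rcases lt_or_eq_of_le (not_lt.mp h) with h' | h'
        · exact Or.inl ⟨ha, h'⟩
        · exact Or.inr h'
      · rintro (⟨ha, h⟩ | rfl)
        · exact ⟨ha, by omega⟩
        · exact ⟨hi, by omega⟩
    have hdisj : Disjoint (I.filter (fun j => j < i)) ({i} : Finset ℕ) := by
      simp only [Finset.disjoint_singleton_right, Finset.mem_filter]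
      rintro ⟨-, h⟩; omega
    rw [h2, Finset.sum_union hdisj, Finset.sum_singleton]
    ring
  rw [Finset.sum_congr rfl split, Finset.sum_add_distrib, Finset.sum_add_distrib]
  have e1 : ∑ i ∈ I, ∑ j ∈ I.filter (fun j => i < j), c i j
      = ∑ j ∈ I, ∑ i ∈ I.filter (· < j), c i j := by
    simp only [Finset.sum_filter]
    exact Finset.sum_comm
  have e2 : ∑ i ∈ I, ∑ j ∈ I.filter (fun j => j < i), c i j
      = ∑ j ∈ I, ∑ i ∈ I.filter (· < j), c i j := by
    refine Finset.sum_congr rfl fun a _ => Finset.sum_congr rfl fun b _ => hsym a b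
  rw [e1, e2]
  ring
set_option maxHeartbeats 1000000 in
/-- Bound on the leading (Cramér–Rao) term of the Polyak–Ruppert decomposition:
second moment of `∇²F(θ*)^{-1}` applied to the weighted average of the scores. -/
theorem assg_leading_term_bound
    {Ω : Type*} {m0 : MeasurableSpace Ω} (P : Measure Ω) [IsProbabilityMeasure P]
    (ℱ : MeasureTheory.Filtration ℕ m0)
    {d : ℕ} (hd : 1 ≤ d)
    (θstar : EuclideanSpace ℝ (Fin d))
    (F : EuclideanSpace ℝ (Fin d) → ℝ)
    (hF1 : Differentiable ℝ F) (hF2 : Differentiable ℝ (gradient F))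
    (hFcrit : gradient F θstar = 0)
    (g : ℕ → EuclideanSpace ℝ (Fin d) → Ω → EuclideanSpace ℝ (Fin d))
    (hgmeas : ∀ t, Measurable[ℱ t] (g t θstar))
    (hgL2 : ∀ t x, MemLp (g t x) 2 P)
    (n : ℕ → ℕ) (hnpos : ∀ t, 0 < n t)
    (N : ℕ → ℕ) (hN : ∀ t, N t = ∑ i ∈ Icc 1 t, n i)
    (ν σs : ℕ → ℝ) (hνpos : ∀ t, 0 < ν t) (hσpos : ∀ t, 0 < σs t)
    (Bν : ℝ) (hBν : 0 ≤ Bν)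
    (σ : ℝ) (hσ0 : 0 ≤ σ) (hσhalf : σ ≤ 1 / 2)
    (σ' : ℝ) (hσ'0 : 0 < σ') (hσ'half : σ' ≤ 1 / 2)
    (Cσ' : ℝ) (hCσ' : 0 ≤ Cσ')
    -- (Dep-2) at θ*
    (hdep : ∀ j : ℕ, 1 ≤ j →
      ∫ ω, ‖(P[g j θstar | ℱ (j - 1)]) ω - gradient F θstar‖ ^ 2 ∂P ≤ Bν ^ 2 * ν j ^ 2)
    -- (GN-2)
    (hgn : ∀ t : ℕ, 1 ≤ t → ∫ ω, ‖g t θstar ω‖ ^ 2 ∂P ≤ σs t ^ 2)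
    -- (Cov)
    (Sm : Matrix (Fin d) (Fin d) ℝ) (hSm : Sm.PosSemidef)
    (Smt : ℕ → Matrix (Fin d) (Fin d) ℝ)
    (hSmt : ∀ t, (Smt t).PosSemidef)
    (hSmtTr : ∀ t : ℕ, 1 ≤ t → (Smt t).trace = Cσ' * (n t : ℝ) ^ (-(2 * σ')))
    (Cov : ℕ → Matrix (Fin d) (Fin d) ℝ)
    (hCov : ∀ t i j, Cov t i j = ∫ ω, g t θstar ω i * g t θstar ω j ∂P)
    (hcov : ∀ t : ℕ, 1 ≤ t → (Sm + Smt t - (n t : ℝ) ^ (2 * σ) • Cov t).PosSemidef)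
    -- the Hessian ∇²F(θ*) as a matrix, invertible with ∇²F(θ*) ⪰ μ I_d
    (μ : ℝ) (hμ : 0 < μ)
    (Hm : Matrix (Fin d) (Fin d) ℝ)
    (hHm : ∀ x : EuclideanSpace ℝ (Fin d),
      Matrix.toEuclideanLin Hm x = fderiv ℝ (gradient F) θstar x)
    (hHminv : IsUnit Hm.det)
    (hHmμ : (Hm - μ • (1 : Matrix (Fin d) (Fin d) ℝ)).PosSemidef)
    (Λ : ℝ) (hΛ : Λ = (Hm⁻¹ * Sm * Hm⁻¹).trace) :
    ∀ t : ℕ, 1 ≤ t →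
      ∫ ω, ‖Matrix.toEuclideanLin Hm⁻¹
          ((N t : ℝ)⁻¹ • ∑ i ∈ Icc 1 t, (n i : ℝ) • g i θstar ω)‖ ^ 2 ∂P
        ≤ Λ / (N t : ℝ) ^ 2 * ∑ i ∈ Icc 1 t, (n i : ℝ) ^ (2 * (1 - σ))
          + Cσ' / (μ ^ 2 * (N t : ℝ) ^ 2) * ∑ i ∈ Icc 1 t, (n i : ℝ) ^ (2 * (1 - σ - σ'))
          + 2 * Bν / (μ ^ 2 * (N t : ℝ) ^ 2)
              * ∑ j ∈ Icc 2 t, (n j : ℝ) * ν j * ∑ i ∈ Icc 1 (j - 1), (n i : ℝ) * σs i := by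
  classical
  intro t ht
  -- abbreviations
  set A : EuclideanSpace ℝ (Fin d) →ₗ[ℝ] EuclideanSpace ℝ (Fin d) :=
    (Matrix.toEuclideanLin Hm⁻¹ : _ →ₗ[ℝ] _) with hA
  have hAapp : ∀ x, A x = Matrix.toEuclideanLin Hm⁻¹ x := fun _ => rfl
  -- basic matrix facts
  have hHsym : Hm.IsHermitian := by
    have h1 := hHmμ.1
    have h2 : (μ • (1 : Matrix (Fin d) (Fin d) ℝ)).conjTranspose
        = μ • (1 : Matrix (Fin d) (Fin d) ℝ) := by
      simp
    rw [Matrix.IsHermitian, Matrix.conjTranspose_sub, h2] at h1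
    have := sub_left_injective h1
    exact this
  have hMsym : (Hm⁻¹).IsHermitian := by
    rw [Matrix.IsHermitian, Matrix.conjTranspose_nonsing_inv, hHsym.eq]
  have hAsymm : (Matrix.toEuclideanLin Hm⁻¹).IsSymmetric :=
    (Matrix.isHermitian_iff_isSymmetric).mp hMsym
  have hcomp : ∀ (M1 M2 : Matrix (Fin d) (Fin d) ℝ) (x : EuclideanSpace ℝ (Fin d)),
      Matrix.toEuclideanLin M1 (Matrix.toEuclideanLin M2 x)
        = Matrix.toEuclideanLin (M1 * M2) x := by
    intro M1 M2 x
    simp [Matrix.toEuclideanLin_apply, Matrix.mulVec_mulVec]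
  -- dot products vs inner products
  have hdotinner : ∀ x y : Fin d → ℝ,
      dotProduct x y
        = ⟪((WithLp.equiv 2 (Fin d → ℝ)).symm x : EuclideanSpace ℝ (Fin d)),
            (WithLp.equiv 2 (Fin d → ℝ)).symm y⟫ := by
    intro x y
    rw [WithLp.equiv_symm_apply, EuclideanSpace.inner_toLp_toLp, star_trivial, dotProduct_comm]
  -- operator norm bound
  have hAnorm : ∀ x : EuclideanSpace ℝ (Fin d), ‖A x‖ ≤ μ⁻¹ * ‖x‖ := by
    intro x
    rcases eq_or_ne (A x) 0 with h0 | h0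
    · rw [h0, norm_zero]; positivity
    · have hy : 0 < ‖A x‖ := norm_pos_iff.mpr h0
      have hxy : Matrix.toEuclideanLin Hm (A x) = x := by
        rw [hAapp, hcomp, Matrix.mul_nonsing_inv _ hHminv]
        simp [Matrix.toEuclideanLin_apply]
      have h := hHmμ.dotProduct_mulVec_nonneg (WithLp.equiv 2 (Fin d → ℝ) (A x))
      rw [star_trivial, Matrix.sub_mulVec, dotProduct_sub,
        Matrix.smul_mulVec, Matrix.one_mulVec] at h
      have e1 : dotProduct (WithLp.equiv 2 (Fin d → ℝ) (A x))
          (Hm *ᵥ WithLp.equiv 2 (Fin d → ℝ) (A x)) = ⟪A x, x⟫ := by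
        have e0 : Hm *ᵥ WithLp.equiv 2 (Fin d → ℝ) (A x)
            = WithLp.equiv 2 (Fin d → ℝ) (Matrix.toEuclideanLin Hm (A x)) := by
          simp [Matrix.toEuclideanLin_apply]
        rw [e0, hdotinner, hxy]
        simp
      have e2 : dotProduct (WithLp.equiv 2 (Fin d → ℝ) (A x))
          (μ • WithLp.equiv 2 (Fin d → ℝ) (A x)) = μ * ‖A x‖ ^ 2 := by
        rw [dotProduct_smul, smul_eq_mul, hdotinner]
        simp only [Equiv.symm_apply_apply]
        rw [real_inner_self_eq_norm_sq]
      rw [e1, e2] at h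
      have h3 : ⟪A x, x⟫ ≤ ‖A x‖ * ‖x‖ := real_inner_le_norm _ _
      have h4 : μ * ‖A x‖ * ‖A x‖ ≤ ‖x‖ * ‖A x‖ := by nlinarith
      have h5 : μ * ‖A x‖ ≤ ‖x‖ := le_of_mul_le_mul_right h4 hy
      calc ‖A x‖ = μ⁻¹ * (μ * ‖A x‖) := by field_simp
        _ ≤ μ⁻¹ * ‖x‖ := by
            exact mul_le_mul_of_nonneg_left h5 (inv_nonneg.mpr hμ.le)
  -- quadratic form of Hm⁻¹ * Hm⁻¹
  have hqform : ∀ x : Fin d → ℝ,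
      dotProduct x ((Hm⁻¹ * Hm⁻¹) *ᵥ x)
        = ‖A ((WithLp.equiv 2 (Fin d → ℝ)).symm x)‖ ^ 2 := by
    intro x
    have e1 : (Hm⁻¹ * Hm⁻¹) *ᵥ x
        = WithLp.equiv 2 (Fin d → ℝ) (Matrix.toEuclideanLin (Hm⁻¹ * Hm⁻¹)
            ((WithLp.equiv 2 (Fin d → ℝ)).symm x)) := by
      simp [Matrix.toEuclideanLin_apply]
    rw [e1]
    have e2 := hdotinner x (WithLp.equiv 2 (Fin d → ℝ)
      (Matrix.toEuclideanLin (Hm⁻¹ * Hm⁻¹) ((WithLp.equiv 2 (Fin d → ℝ)).symm x)))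
    rw [e2]
    simp only [Equiv.symm_apply_apply]
    rw [← hcomp, ← hAapp, ← hAapp, real_inner_comm, hAsymm (A _) _]
    exact real_inner_self_eq_norm_sq _
  have hMMpsd : (Hm⁻¹ * Hm⁻¹).PosSemidef := by
    refine Matrix.PosSemidef.of_dotProduct_mulVec_nonneg ?_ ?_
    · show (Hm⁻¹ * Hm⁻¹).conjTranspose = Hm⁻¹ * Hm⁻¹
      rw [Matrix.conjTranspose_mul, hMsym.eq]
    · intro x
      have := hqform x
      simp only [star_trivial]
      rw [this]
      positivity
  have hcIpsd : (μ⁻¹ ^ 2 • (1 : Matrix (Fin d) (Fin d) ℝ) - Hm⁻¹ * Hm⁻¹).PosSemidef := by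
    refine Matrix.PosSemidef.of_dotProduct_mulVec_nonneg ?_ ?_
    · show _ᴴ = _
      rw [Matrix.conjTranspose_sub, Matrix.conjTranspose_smul, Matrix.conjTranspose_one,
        Matrix.conjTranspose_mul, hMsym.eq]
      simp
    · intro x
      simp only [star_trivial]
      rw [Matrix.sub_mulVec, dotProduct_sub, Matrix.smul_mulVec,
        Matrix.one_mulVec, dotProduct_smul, smul_eq_mul, hqform]
      have e3 : dotProduct x x = ‖((WithLp.equiv 2 (Fin d → ℝ)).symm x :
          EuclideanSpace ℝ (Fin d))‖ ^ 2 := by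
        rw [hdotinner]; exact real_inner_self_eq_norm_sq _
      rw [e3]
      have hb := hAnorm ((WithLp.equiv 2 (Fin d → ℝ)).symm x)
      have hb2 : ‖A ((WithLp.equiv 2 (Fin d → ℝ)).symm x)‖ ^ 2
          ≤ (μ⁻¹ * ‖((WithLp.equiv 2 (Fin d → ℝ)).symm x :
              EuclideanSpace ℝ (Fin d))‖) ^ 2 :=
        pow_le_pow_left₀ (norm_nonneg _) hb 2
      rw [mul_pow] at hb2
      linarith
  -- MemLp facts
  have hAf : ∀ i : ℕ, MemLp (fun ω => A (g i θstar ω)) 2 P := by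
    intro i
    have h := (LinearMap.toContinuousLinearMap A).comp_memLp' (hgL2 i θstar)
    exact h
  have hAAf : ∀ i : ℕ, MemLp (fun ω => A (A (g i θstar ω))) 2 P := by
    intro i
    have h := (LinearMap.toContinuousLinearMap A).comp_memLp' (hAf i)
    exact h
  have hfc : ∀ (i : ℕ) (k : Fin d), MemLp (fun ω => g i θstar ω k) 2 P := by
    intro i k
    have h := (EuclideanSpace.proj k (𝕜 := ℝ)).comp_memLp' (hgL2 i θstar)
    exact h
  have hprod_int : ∀ (i : ℕ) (k l : Fin d),
      Integrable (fun ω => g i θstar ω k * g i θstar ω l) P := by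
    intro i k l
    have h := helper_integrable_inner (E := ℝ) (hfc i k) (hfc i l)
    refine h.congr (Filter.Eventually.of_forall fun ω => ?_)
    simp [RCLike.inner_apply, mul_comm]
  -- the basic quantities
  set q : ℕ → ℕ → ℝ := fun i j => ∫ ω, ⟪A (g i θstar ω), A (g j θstar ω)⟫ ∂P with hq
  have hqsym : ∀ i j, q i j = q j i := by
    intro i j
    simp only [hq]
    exact integral_congr_ae (Filter.Eventually.of_forall fun ω => real_inner_comm _ _)
  -- expansion of the squared norm
  have hexp : ∫ ω, ‖A ((N t : ℝ)⁻¹ • ∑ i ∈ Icc 1 t, (n i : ℝ) • g i θstar ω)‖ ^ 2 ∂P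
      = ((N t : ℝ)⁻¹) ^ 2 * ∑ i ∈ Icc 1 t, ∑ j ∈ Icc 1 t, ((n i : ℝ) * (n j : ℝ)) * q i j := by
    have hpt : ∀ ω, ‖A ((N t : ℝ)⁻¹ • ∑ i ∈ Icc 1 t, (n i : ℝ) • g i θstar ω)‖ ^ 2
        = ((N t : ℝ)⁻¹) ^ 2 * ∑ i ∈ Icc 1 t, ∑ j ∈ Icc 1 t,
            ((n i : ℝ) * (n j : ℝ)) * ⟪A (g i θstar ω), A (g j θstar ω)⟫ := by
      intro ω
      rw [_root_.map_smul, norm_smul, mul_pow, norm_inv, Real.norm_natCast]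
      congr 1
      rw [← real_inner_self_eq_norm_sq, _root_.map_sum, _root_.sum_inner]
      refine Finset.sum_congr rfl fun i _ => ?_
      rw [_root_.inner_sum]
      refine Finset.sum_congr rfl fun j _ => ?_
      rw [_root_.map_smul, _root_.map_smul, real_inner_smul_left, real_inner_smul_right]
      ring
    calc ∫ ω, ‖A ((N t : ℝ)⁻¹ • ∑ i ∈ Icc 1 t, (n i : ℝ) • g i θstar ω)‖ ^ 2 ∂P
        = ∫ ω, ((N t : ℝ)⁻¹) ^ 2 * ∑ i ∈ Icc 1 t, ∑ j ∈ Icc 1 t,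
            ((n i : ℝ) * (n j : ℝ)) * ⟪A (g i θstar ω), A (g j θstar ω)⟫ ∂P :=
          integral_congr_ae (Filter.Eventually.of_forall hpt)
      _ = ((N t : ℝ)⁻¹) ^ 2 * ∫ ω, ∑ i ∈ Icc 1 t, ∑ j ∈ Icc 1 t,
            ((n i : ℝ) * (n j : ℝ)) * ⟪A (g i θstar ω), A (g j θstar ω)⟫ ∂P :=
          integral_const_mul _ _
      _ = ((N t : ℝ)⁻¹) ^ 2 * ∑ i ∈ Icc 1 t, ∑ j ∈ Icc 1 t,
            ((n i : ℝ) * (n j : ℝ)) * q i j := by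
          congr 1
          rw [integral_finset_sum _ (fun i _ => integrable_finset_sum _
            (fun j _ => (helper_integrable_inner (hAf i) (hAf j)).const_mul _))]
          refine Finset.sum_congr rfl fun i _ => ?_
          rw [integral_finset_sum _
            (fun j _ => (helper_integrable_inner (hAf i) (hAf j)).const_mul _)]
          refine Finset.sum_congr rfl fun j _ => ?_
          exact integral_const_mul _ _
  -- diagonal bound
  have hdiag : ∀ i : ℕ, 1 ≤ i → i ≤ t →
      q i i ≤ ((n i : ℝ) ^ (2 * σ))⁻¹ * (Λ + μ⁻¹ ^ 2 * (Cσ' * (n i : ℝ) ^ (-(2 * σ')))) := by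
    intro i hi hit
    have htrace : q i i = ((Hm⁻¹ * Hm⁻¹) * Cov i).trace := by
      have hpt : ∀ ω, ⟪A (g i θstar ω), A (g i θstar ω)⟫
          = ∑ k : Fin d, ∑ l : Fin d,
              (Hm⁻¹ * Hm⁻¹) k l * (g i θstar ω l * g i θstar ω k) := by
        intro ω
        have h0 : ⟪A (g i θstar ω), A (g i θstar ω)⟫
            = ⟪Matrix.toEuclideanLin (Hm⁻¹ * Hm⁻¹) (g i θstar ω), g i θstar ω⟫ := by
          rw [← hcomp, ← hAapp, ← hAapp]
          exact (hAsymm (A (g i θstar ω)) (g i θstar ω)).symm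
        rw [h0]
        simp only [Matrix.toEuclideanLin_apply, PiLp.inner_apply, RCLike.inner_apply,
          conj_trivial, PiLp.toLp_apply,
          Matrix.mulVec, dotProduct, Finset.mul_sum]
        exact Finset.sum_congr rfl fun k _ => Finset.sum_congr rfl fun l _ => by ring
      have hqii : q i i = ∑ k : Fin d, ∑ l : Fin d, (Hm⁻¹ * Hm⁻¹) k l * Cov i l k := by
        simp only [hq]
        rw [integral_congr_ae (Filter.Eventually.of_forall hpt),
          integral_finset_sum _
            (f := fun k ω => ∑ l : Fin d, (Hm⁻¹ * Hm⁻¹) k l * (g i θstar ω l * g i θstar ω k))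
            (fun k _ => integrable_finset_sum _
            (fun l _ => (hprod_int i l k).const_mul _))]
        refine Finset.sum_congr rfl fun k _ => ?_
        rw [integral_finset_sum _ (fun l _ => (hprod_int i l k).const_mul _)]
        refine Finset.sum_congr rfl fun l _ => ?_
        rw [integral_const_mul, hCov i l k]
      rw [hqii]
      simp [Matrix.trace, Matrix.mul_apply, Matrix.diag]
    have hnipos : (0 : ℝ) < (n i : ℝ) := by exact_mod_cast hnpos i
    have hc1 : (0 : ℝ) < (n i : ℝ) ^ (2 * σ) := Real.rpow_pos_of_pos hnipos _
    have h1 := helper_trace_mul_nonneg (hcov i hi) hMMpsd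
    have h2 := helper_trace_mul_nonneg (hSmt i) hcIpsd
    rw [Matrix.sub_mul, Matrix.add_mul, Matrix.smul_mul, Matrix.trace_sub,
      Matrix.trace_add, Matrix.trace_smul, smul_eq_mul] at h1
    rw [Matrix.mul_sub, Matrix.mul_smul, Matrix.trace_sub, Matrix.trace_smul,
      Matrix.mul_one, smul_eq_mul] at h2
    have hSmtr : (Sm * (Hm⁻¹ * Hm⁻¹)).trace = Λ := by
      rw [hΛ, ← Matrix.mul_assoc, Matrix.trace_mul_comm, ← Matrix.mul_assoc]
    have hqcomm : q i i = (Cov i * (Hm⁻¹ * Hm⁻¹)).trace := by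
      rw [htrace, Matrix.trace_mul_comm]
    have hkey : (n i : ℝ) ^ (2 * σ) * q i i
        ≤ Λ + μ⁻¹ ^ 2 * (Cσ' * (n i : ℝ) ^ (-(2 * σ'))) := by
      have h3 : (Smt i * (Hm⁻¹ * Hm⁻¹)).trace ≤ μ⁻¹ ^ 2 * (Smt i).trace := by linarith
      rw [hqcomm]
      have h4 : (n i : ℝ) ^ (2 * σ) * (Cov i * (Hm⁻¹ * Hm⁻¹)).trace
          ≤ (Sm * (Hm⁻¹ * Hm⁻¹)).trace + (Smt i * (Hm⁻¹ * Hm⁻¹)).trace := by linarith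
      rw [hSmtr] at h4
      have h5 := hSmtTr i hi
      calc (n i : ℝ) ^ (2 * σ) * (Cov i * (Hm⁻¹ * Hm⁻¹)).trace
          ≤ Λ + (Smt i * (Hm⁻¹ * Hm⁻¹)).trace := h4
        _ ≤ Λ + μ⁻¹ ^ 2 * (Smt i).trace := by linarith
        _ = Λ + μ⁻¹ ^ 2 * (Cσ' * (n i : ℝ) ^ (-(2 * σ'))) := by rw [h5]
    calc q i i = ((n i : ℝ) ^ (2 * σ))⁻¹ * ((n i : ℝ) ^ (2 * σ) * q i i) := by
          field_simp
      _ ≤ ((n i : ℝ) ^ (2 * σ))⁻¹ * (Λ + μ⁻¹ ^ 2 * (Cσ' * (n i : ℝ) ^ (-(2 * σ')))) :=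
          mul_le_mul_of_nonneg_left hkey (inv_nonneg.mpr hc1.le)
  -- cross-term bound
  have hcross : ∀ i j : ℕ, 1 ≤ i → i < j → j ≤ t →
      q i j ≤ (μ⁻¹ ^ 2 * σs i) * (Bν * ν j) := by
    intro i j hi hij hjt
    have hm : (ℱ (j - 1) : MeasurableSpace Ω) ≤ m0 := ℱ.le _
    have hmeasu : StronglyMeasurable[ℱ (j - 1)] (fun ω => A (A (g i θstar ω))) := by
      have h1 : Measurable[ℱ (j - 1)] (g i θstar) :=
        (hgmeas i).mono (ℱ.mono (by omega)) le_rfl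
      have h2 : Measurable (fun y : EuclideanSpace ℝ (Fin d) => A (A y)) := by
        have := ((LinearMap.toContinuousLinearMap A).continuous.comp
          (LinearMap.toContinuousLinearMap A).continuous).measurable
        exact this
      exact (h2.comp h1).stronglyMeasurable
    have hw : MemLp (P[g j θstar | ℱ (j - 1)]) 2 P :=
      helper_memℒp_condexp hm (hgL2 j θstar)
    have e0 : q i j = ∫ ω, ⟪A (A (g i θstar ω)), g j θstar ω⟫ ∂P := by
      refine integral_congr_ae (Filter.Eventually.of_forall fun ω => ?_)
      exact (hAsymm (A (g i θstar ω)) (g j θstar ω)).symm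
    have e1 : ∫ ω, ⟪A (A (g i θstar ω)), g j θstar ω⟫ ∂P
        = ∫ ω, ⟪A (A (g i θstar ω)), (P[g j θstar | ℱ (j - 1)]) ω⟫ ∂P :=
      helper_integral_inner_condexp hm (hAAf i) hmeasu (hgL2 j θstar)
    have e2 := helper_cs (hAAf i) hw
    have hb1 : Real.sqrt (∫ ω, ‖A (A (g i θstar ω))‖ ^ 2 ∂P) ≤ μ⁻¹ ^ 2 * σs i := by
      have hpt : ∀ ω, ‖A (A (g i θstar ω))‖ ^ 2
          ≤ (μ⁻¹ ^ 2) ^ 2 * ‖g i θstar ω‖ ^ 2 := by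
        intro ω
        have h1 : ‖A (A (g i θstar ω))‖ ≤ μ⁻¹ ^ 2 * ‖g i θstar ω‖ := by
          calc ‖A (A (g i θstar ω))‖ ≤ μ⁻¹ * ‖A (g i θstar ω)‖ := hAnorm _
            _ ≤ μ⁻¹ * (μ⁻¹ * ‖g i θstar ω‖) :=
                mul_le_mul_of_nonneg_left (hAnorm _) (by positivity)
            _ = μ⁻¹ ^ 2 * ‖g i θstar ω‖ := by ring
        calc ‖A (A (g i θstar ω))‖ ^ 2 ≤ (μ⁻¹ ^ 2 * ‖g i θstar ω‖) ^ 2 :=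
            pow_le_pow_left₀ (norm_nonneg _) h1 2
          _ = (μ⁻¹ ^ 2) ^ 2 * ‖g i θstar ω‖ ^ 2 := by ring
      have hint : ∫ ω, ‖A (A (g i θstar ω))‖ ^ 2 ∂P ≤ (μ⁻¹ ^ 2 * σs i) ^ 2 := by
        calc ∫ ω, ‖A (A (g i θstar ω))‖ ^ 2 ∂P
            ≤ ∫ ω, (μ⁻¹ ^ 2) ^ 2 * ‖g i θstar ω‖ ^ 2 ∂P :=
              integral_mono (helper_integrable_normsq (hAAf i))
                ((helper_integrable_normsq (hgL2 i θstar)).const_mul _) hpt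
          _ = (μ⁻¹ ^ 2) ^ 2 * ∫ ω, ‖g i θstar ω‖ ^ 2 ∂P := integral_const_mul _ _
          _ ≤ (μ⁻¹ ^ 2) ^ 2 * σs i ^ 2 :=
              mul_le_mul_of_nonneg_left (hgn i hi) (by positivity)
          _ = (μ⁻¹ ^ 2 * σs i) ^ 2 := by ring
      calc Real.sqrt (∫ ω, ‖A (A (g i θstar ω))‖ ^ 2 ∂P)
          ≤ Real.sqrt ((μ⁻¹ ^ 2 * σs i) ^ 2) := Real.sqrt_le_sqrt hint
        _ = μ⁻¹ ^ 2 * σs i := Real.sqrt_sq (mul_nonneg (by positivity) (hσpos i).le)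
    have hb2 : Real.sqrt (∫ ω, ‖(P[g j θstar | ℱ (j - 1)]) ω‖ ^ 2 ∂P) ≤ Bν * ν j := by
      have hint := hdep j (by omega)
      rw [hFcrit] at hint
      simp only [sub_zero] at hint
      calc Real.sqrt (∫ ω, ‖(P[g j θstar | ℱ (j - 1)]) ω‖ ^ 2 ∂P)
          ≤ Real.sqrt ((Bν * ν j) ^ 2) := Real.sqrt_le_sqrt (by rw [mul_pow]; exact hint)
        _ = Bν * ν j := Real.sqrt_sq (mul_nonneg hBν (hνpos j).le)
    calc q i j = ∫ ω, ⟪A (A (g i θstar ω)), (P[g j θstar | ℱ (j - 1)]) ω⟫ ∂P := by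
          rw [e0, e1]
      _ ≤ Real.sqrt (∫ ω, ‖A (A (g i θstar ω))‖ ^ 2 ∂P)
            * Real.sqrt (∫ ω, ‖(P[g j θstar | ℱ (j - 1)]) ω‖ ^ 2 ∂P) := e2
      _ ≤ (μ⁻¹ ^ 2 * σs i) * (Bν * ν j) :=
          mul_le_mul hb1 hb2 (Real.sqrt_nonneg _)
            (mul_nonneg (by positivity) (hσpos i).le)
  -- assemble everything
  have hdec := helper_sum_decomp (Icc 1 t) (fun i j => ((n i : ℝ) * (n j : ℝ)) * q i j)
      (fun i j => by
        show ((n i : ℝ) * (n j : ℝ)) * q i j = ((n j : ℝ) * (n i : ℝ)) * q j i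
        rw [hqsym i j]; ring)
  have hidx1 : ∀ j ∈ Icc 1 t, (Icc 1 t).filter (· < j) = Icc 1 (j - 1) := by
    intro j hj
    rw [Finset.mem_Icc] at hj
    ext a
    simp only [Finset.mem_filter, Finset.mem_Icc]
    omega
  have hidx : ∑ j ∈ Icc 1 t, ∑ i ∈ (Icc 1 t).filter (· < j), ((n i : ℝ) * (n j : ℝ)) * q i j
      = ∑ j ∈ Icc 2 t, ∑ i ∈ Icc 1 (j - 1), ((n i : ℝ) * (n j : ℝ)) * q i j := by
    rw [Finset.sum_congr rfl (fun j hj => by rw [hidx1 j hj])]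
    refine (Finset.sum_subset ?_ ?_).symm
    · intro x hx
      rw [Finset.mem_Icc] at *
      omega
    · intro x hx hnx
      rw [Finset.mem_Icc] at hx
      rw [Finset.mem_Icc] at hnx
      have : x = 1 := by omega
      subst this
      simp
  have hNpos : (0 : ℝ) < (N t : ℝ) := by
    have h0 : 0 < N t := by
      rw [hN t]
      exact Finset.sum_pos (fun i _ => hnpos i) ⟨1, Finset.mem_Icc.mpr ⟨le_refl 1, ht⟩⟩
    exact_mod_cast h0
  have hdiagsum : ∑ i ∈ Icc 1 t, ((n i : ℝ) * (n i : ℝ)) * q i i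
      ≤ Λ * ∑ i ∈ Icc 1 t, (n i : ℝ) ^ (2 * (1 - σ))
        + μ⁻¹ ^ 2 * Cσ' * ∑ i ∈ Icc 1 t, (n i : ℝ) ^ (2 * (1 - σ - σ')) := by
    have hterm : ∀ i ∈ Icc 1 t, ((n i : ℝ) * (n i : ℝ)) * q i i
        ≤ Λ * (n i : ℝ) ^ (2 * (1 - σ)) + μ⁻¹ ^ 2 * Cσ' * (n i : ℝ) ^ (2 * (1 - σ - σ')) := by
      intro i hi0
      rw [Finset.mem_Icc] at hi0
      have hd := hdiag i hi0.1 hi0.2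
      have hnipos : (0 : ℝ) < (n i : ℝ) := by exact_mod_cast hnpos i
      have hxx : (n i : ℝ) * (n i : ℝ) = (n i : ℝ) ^ ((2 : ℕ) : ℝ) := by
        rw [Real.rpow_natCast]; ring
      have e1 : (n i : ℝ) * (n i : ℝ) * (((n i : ℝ) ^ (2 * σ))⁻¹)
          = (n i : ℝ) ^ (2 * (1 - σ)) := by
        rw [← Real.rpow_neg hnipos.le, hxx, ← Real.rpow_add hnipos]
        congr 1
        push_cast
        ring
      have e2 : (n i : ℝ) * (n i : ℝ)
            * (((n i : ℝ) ^ (2 * σ))⁻¹ * (n i : ℝ) ^ (-(2 * σ')))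
          = (n i : ℝ) ^ (2 * (1 - σ - σ')) := by
        rw [← Real.rpow_neg hnipos.le, ← Real.rpow_add hnipos, hxx,
          ← Real.rpow_add hnipos]
        congr 1
        push_cast
        ring
      calc ((n i : ℝ) * (n i : ℝ)) * q i i
          ≤ ((n i : ℝ) * (n i : ℝ))
              * (((n i : ℝ) ^ (2 * σ))⁻¹ * (Λ + μ⁻¹ ^ 2 * (Cσ' * (n i : ℝ) ^ (-(2 * σ'))))) :=
            mul_le_mul_of_nonneg_left hd (by positivity)
        _ = Λ * ((n i : ℝ) * (n i : ℝ) * (((n i : ℝ) ^ (2 * σ))⁻¹))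
            + μ⁻¹ ^ 2 * Cσ' * ((n i : ℝ) * (n i : ℝ)
                * (((n i : ℝ) ^ (2 * σ))⁻¹ * (n i : ℝ) ^ (-(2 * σ')))) := by ring
        _ = Λ * (n i : ℝ) ^ (2 * (1 - σ))
            + μ⁻¹ ^ 2 * Cσ' * (n i : ℝ) ^ (2 * (1 - σ - σ')) := by rw [e1, e2]
    calc ∑ i ∈ Icc 1 t, ((n i : ℝ) * (n i : ℝ)) * q i i
        ≤ ∑ i ∈ Icc 1 t, (Λ * (n i : ℝ) ^ (2 * (1 - σ))
            + μ⁻¹ ^ 2 * Cσ' * (n i : ℝ) ^ (2 * (1 - σ - σ'))) := Finset.sum_le_sum hterm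
      _ = Λ * ∑ i ∈ Icc 1 t, (n i : ℝ) ^ (2 * (1 - σ))
          + μ⁻¹ ^ 2 * Cσ' * ∑ i ∈ Icc 1 t, (n i : ℝ) ^ (2 * (1 - σ - σ')) := by
          rw [Finset.sum_add_distrib, Finset.mul_sum, Finset.mul_sum]
  have hcrosssum : ∑ j ∈ Icc 2 t, ∑ i ∈ Icc 1 (j - 1), ((n i : ℝ) * (n j : ℝ)) * q i j
      ≤ (μ⁻¹ ^ 2 * Bν)
          * ∑ j ∈ Icc 2 t, (n j : ℝ) * ν j * ∑ i ∈ Icc 1 (j - 1), (n i : ℝ) * σs i := by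
    have hterm : ∀ j ∈ Icc 2 t,
        ∑ i ∈ Icc 1 (j - 1), ((n i : ℝ) * (n j : ℝ)) * q i j
          ≤ (μ⁻¹ ^ 2 * Bν) * ((n j : ℝ) * ν j * ∑ i ∈ Icc 1 (j - 1), (n i : ℝ) * σs i) := by
      intro j hj
      rw [Finset.mem_Icc] at hj
      have hin : ∀ i ∈ Icc 1 (j - 1), ((n i : ℝ) * (n j : ℝ)) * q i j
          ≤ (μ⁻¹ ^ 2 * Bν) * ((n j : ℝ) * ν j * ((n i : ℝ) * σs i)) := by
        intro i hi0
        rw [Finset.mem_Icc] at hi0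
        have hc := hcross i j hi0.1 (by omega) hj.2
        calc ((n i : ℝ) * (n j : ℝ)) * q i j
            ≤ ((n i : ℝ) * (n j : ℝ)) * ((μ⁻¹ ^ 2 * σs i) * (Bν * ν j)) :=
              mul_le_mul_of_nonneg_left hc (by positivity)
          _ = (μ⁻¹ ^ 2 * Bν) * ((n j : ℝ) * ν j * ((n i : ℝ) * σs i)) := by ring
      calc ∑ i ∈ Icc 1 (j - 1), ((n i : ℝ) * (n j : ℝ)) * q i j
          ≤ ∑ i ∈ Icc 1 (j - 1), (μ⁻¹ ^ 2 * Bν)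
              * ((n j : ℝ) * ν j * ((n i : ℝ) * σs i)) := Finset.sum_le_sum hin
        _ = (μ⁻¹ ^ 2 * Bν) * ((n j : ℝ) * ν j * ∑ i ∈ Icc 1 (j - 1), (n i : ℝ) * σs i) := by
            rw [Finset.mul_sum, Finset.mul_sum]
    calc ∑ j ∈ Icc 2 t, ∑ i ∈ Icc 1 (j - 1), ((n i : ℝ) * (n j : ℝ)) * q i j
        ≤ ∑ j ∈ Icc 2 t, (μ⁻¹ ^ 2 * Bν)
            * ((n j : ℝ) * ν j * ∑ i ∈ Icc 1 (j - 1), (n i : ℝ) * σs i) :=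
          Finset.sum_le_sum hterm
      _ = (μ⁻¹ ^ 2 * Bν)
          * ∑ j ∈ Icc 2 t, (n j : ℝ) * ν j * ∑ i ∈ Icc 1 (j - 1), (n i : ℝ) * σs i := by
          rw [Finset.mul_sum]
  calc ∫ ω, ‖Matrix.toEuclideanLin Hm⁻¹
          ((N t : ℝ)⁻¹ • ∑ i ∈ Icc 1 t, (n i : ℝ) • g i θstar ω)‖ ^ 2 ∂P
      = ((N t : ℝ)⁻¹) ^ 2 * ∑ i ∈ Icc 1 t, ∑ j ∈ Icc 1 t,
          ((n i : ℝ) * (n j : ℝ)) * q i j := hexp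
    _ = ((N t : ℝ)⁻¹) ^ 2 * (∑ i ∈ Icc 1 t, ((n i : ℝ) * (n i : ℝ)) * q i i
          + 2 * ∑ j ∈ Icc 2 t, ∑ i ∈ Icc 1 (j - 1), ((n i : ℝ) * (n j : ℝ)) * q i j) := by
        rw [hdec, hidx]
    _ ≤ ((N t : ℝ)⁻¹) ^ 2 * ((Λ * ∑ i ∈ Icc 1 t, (n i : ℝ) ^ (2 * (1 - σ))
          + μ⁻¹ ^ 2 * Cσ' * ∑ i ∈ Icc 1 t, (n i : ℝ) ^ (2 * (1 - σ - σ')))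
          + 2 * ((μ⁻¹ ^ 2 * Bν)
            * ∑ j ∈ Icc 2 t, (n j : ℝ) * ν j * ∑ i ∈ Icc 1 (j - 1), (n i : ℝ) * σs i)) := by
        refine mul_le_mul_of_nonneg_left ?_ (by positivity)
        linarith [hdiagsum, hcrosssum]
    _ = Λ / (N t : ℝ) ^ 2 * ∑ i ∈ Icc 1 t, (n i : ℝ) ^ (2 * (1 - σ))
          + Cσ' / (μ ^ 2 * (N t : ℝ) ^ 2) * ∑ i ∈ Icc 1 t, (n i : ℝ) ^ (2 * (1 - σ - σ'))
          + 2 * Bν / (μ ^ 2 * (N t : ℝ) ^ 2)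
              * ∑ j ∈ Icc 2 t, (n j : ℝ) * ν j * ∑ i ∈ Icc 1 (j - 1), (n i : ℝ) * σs i := by
        field_simp
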